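/- Let H be a finite-dimensional real inner product space and let γ be the standard Gaussian measure on H (the centered Gaussian measure whose covariance form is the inner product of H). Let Γ be a finite positive Borel measure on H such that ∫_H e^{⟨v, w⟩} dΓ(v) ≤ ∫_H e^{⟨v, w⟩} dγ(v) for every w ∈ H. Then for every positive semidefinite symmetric bilinear form B on H, setting q(v) := B(v, v)/2, one has ∫_H e^{q(v)} dΓ(v) ≤ ∫_H e^{q(v)} dγ(v) (as an inequality in [0, ∞]). -/

import Mathlib

open MeasureTheory
open scoped RealInnerProductSpace

noncomputable section

/-- The standard Gaussian measure on a finite-dimensional real inner product space `H`: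
the centered Gaussian measure whose covariance form is the inner product of `H`,
i.e. the law of `Σ_i g_i e_i` for an orthonormal basis `(e_i)` of `H` and independent standard
normal random variables `(g_i)`. -/
def stdGaussian (H : Type*) [NormedAddCommGroup H] [InnerProductSpace ℝ H]
    [MeasurableSpace H] [FiniteDimensional ℝ H] : Measure H :=
  Measure.map (fun a : Fin (Module.finrank ℝ H) → ℝ => ∑ i, a i • stdOrthonormalBasis ℝ H i)
    (Measure.pi fun _ => ProbabilityTheory.gaussianReal 0 1)

end

section Aux

open ProbabilityTheory Real
open scoped ENNReal

/-- Laplace transform of the standard real Gaussian. -/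
lemma lintegral_exp_mul_gaussianReal (c : ℝ) :
    ∫⁻ x, ENNReal.ofReal (Real.exp (x * c)) ∂(gaussianReal 0 1)
      = ENNReal.ofReal (Real.exp (c ^ 2 / 2)) := by
  have key : ∀ x : ℝ, gaussianPDFReal 0 1 x * Real.exp (x * c)
      = Real.exp (c ^ 2 / 2) * gaussianPDFReal c 1 x := by
    intro x
    simp only [gaussianPDFReal, NNReal.coe_one, mul_one]
    have h1 : Real.exp (- (x - 0) ^ 2 / 2) * Real.exp (x * c)
        = Real.exp (c ^ 2 / 2) * Real.exp (- (x - c) ^ 2 / 2) := by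
      rw [← Real.exp_add, ← Real.exp_add]
      congr 1
      ring
    linear_combination (Real.sqrt (2 * π))⁻¹ * h1
  have hmeas : Measurable fun x : ℝ => ENNReal.ofReal (Real.exp (x * c)) := by
    exact (Real.measurable_exp.comp (measurable_id.mul_const c)).ennreal_ofReal
  rw [gaussianReal_of_var_ne_zero 0 one_ne_zero,
    lintegral_withDensity_eq_lintegral_mul _ (measurable_gaussianPDF 0 1) hmeas]
  calc ∫⁻ x, (gaussianPDF 0 1 * fun x => ENNReal.ofReal (Real.exp (x * c))) x
      = ∫⁻ x, ENNReal.ofReal (Real.exp (c ^ 2 / 2))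
          * ENNReal.ofReal (gaussianPDFReal c 1 x) := by
        refine lintegral_congr fun x => ?_
        simp only [Pi.mul_apply, gaussianPDF]
        rw [← ENNReal.ofReal_mul (gaussianPDFReal_nonneg 0 1 x),
          ← ENNReal.ofReal_mul (Real.exp_nonneg _), key x]
    _ = ENNReal.ofReal (Real.exp (c ^ 2 / 2)) := by
        rw [lintegral_const_mul _ (measurable_gaussianPDFReal c 1).ennreal_ofReal,
          lintegral_gaussianPDFReal_eq_one c one_ne_zero, mul_one]

/-- Tonelli for a product of coordinate functions over a finite product of copies of a
sigma-finite measure on `ℝ`. -/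
lemma lintegral_pi_prod {n : ℕ} (μ : Measure ℝ) [SigmaFinite μ] (f : Fin n → ℝ → ℝ≥0∞)
    (hf : ∀ i, Measurable (f i)) :
    ∫⁻ x : Fin n → ℝ, ∏ i, f i (x i) ∂(Measure.pi fun _ => μ) = ∏ i, ∫⁻ x, f i x ∂μ := by
  induction n with
  | zero => simp
  | succ n ih =>
    have hprod : Measurable fun x : Fin (n + 1) → ℝ => ∏ i, f i (x i) :=
      Finset.measurable_prod _ fun i _ => (hf i).comp (measurable_pi_apply i)
    rw [← ((measurePreserving_piFinSuccAbove (fun _ : Fin (n + 1) => μ) 0).symm).lintegral_comp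
      hprod]
    simp only [MeasurableEquiv.piFinSuccAbove_symm_apply, Fin.insertNthEquiv, Equiv.coe_fn_mk,
      Fin.prod_univ_succ, Fin.insertNth_zero, Fin.cons_zero, Fin.cons_succ, Fin.zero_succAbove, cast_eq]
    have hg : Measurable fun y : Fin n → ℝ => ∏ i, f i.succ (y i) :=
      Finset.measurable_prod _ fun i _ => (hf i.succ).comp (measurable_pi_apply i)
    rw [lintegral_prod_mul (hf 0).aemeasurable hg.aemeasurable]
    rw [ih (fun i => f i.succ) (fun i => hf i.succ)]

variable {H : Type*} [NormedAddCommGroup H] [InnerProductSpace ℝ H]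
  [MeasurableSpace H] [BorelSpace H] [FiniteDimensional ℝ H]

lemma measurable_stdGaussian_map :
    Measurable (fun a : Fin (Module.finrank ℝ H) → ℝ =>
      ∑ i, a i • stdOrthonormalBasis ℝ H i) :=
  Finset.measurable_sum _ fun i _ => (measurable_pi_apply i).smul_const _

instance : IsProbabilityMeasure (_root_.stdGaussian H) :=
  Measure.isProbabilityMeasure_map measurable_stdGaussian_map.aemeasurable

/-- Laplace transform of the standard Gaussian measure on `H`. -/
lemma lintegral_exp_inner_stdGaussian (x : H) :
    ∫⁻ w, ENNReal.ofReal (Real.exp ⟪x, w⟫) ∂(_root_.stdGaussian H)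
      = ENNReal.ofReal (Real.exp (‖x‖ ^ 2 / 2)) := by
  have hmeas : Measurable fun w : H => ENNReal.ofReal (Real.exp ⟪x, w⟫) :=
    (Real.measurable_exp.comp
      ((continuous_const.inner continuous_id).measurable)).ennreal_ofReal
  rw [_root_.stdGaussian, lintegral_map hmeas measurable_stdGaussian_map]
  calc ∫⁻ a : Fin (Module.finrank ℝ H) → ℝ,
        ENNReal.ofReal (Real.exp ⟪x, ∑ i, a i • stdOrthonormalBasis ℝ H i⟫)
        ∂(Measure.pi fun _ => ProbabilityTheory.gaussianReal 0 1)
      = ∫⁻ a : Fin (Module.finrank ℝ H) → ℝ,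
          ∏ i, ENNReal.ofReal (Real.exp (a i * ⟪x, stdOrthonormalBasis ℝ H i⟫))
          ∂(Measure.pi fun _ => ProbabilityTheory.gaussianReal 0 1) := by
        refine lintegral_congr fun a => ?_
        rw [inner_sum]
        simp_rw [real_inner_smul_right]
        rw [Real.exp_sum, ENNReal.ofReal_prod_of_nonneg (fun i _ => (Real.exp_nonneg _))]
    _ = ∏ i, ∫⁻ t, ENNReal.ofReal (Real.exp (t * ⟪x, stdOrthonormalBasis ℝ H i⟫))
          ∂(ProbabilityTheory.gaussianReal 0 1) :=
        lintegral_pi_prod _ _ fun i =>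
          (Real.measurable_exp.comp (measurable_id.mul_const _)).ennreal_ofReal
    _ = ∏ i, ENNReal.ofReal (Real.exp (⟪x, stdOrthonormalBasis ℝ H i⟫ ^ 2 / 2)) := by
        simp_rw [lintegral_exp_mul_gaussianReal]
    _ = ENNReal.ofReal (Real.exp (‖x‖ ^ 2 / 2)) := by
        have hsum : ∑ i, ⟪x, stdOrthonormalBasis ℝ H i⟫ ^ 2 = ‖x‖ ^ 2 := by
          rw [← real_inner_self_eq_norm_sq, ← (stdOrthonormalBasis ℝ H).sum_inner_mul_inner x x]
          refine Finset.sum_congr rfl fun i _ => ?_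
          rw [sq, real_inner_comm x (stdOrthonormalBasis ℝ H i)]
        rw [← ENNReal.ofReal_prod_of_nonneg (fun i _ => (Real.exp_nonneg _)),
          ← Real.exp_sum, ← Finset.sum_div, hsum]

end Aux

/-- Let `γ` be the standard Gaussian measure on a finite-dimensional real inner
product space `H` and let `Γ` be a finite positive Borel measure on `H` whose Laplace transform
is dominated by that of `γ`. Then for every positive semidefinite symmetric bilinear form `B` on
`H`, with `q(v) = B(v,v)/2`, one has `∫ e^q dΓ ≤ ∫ e^q dγ` (in `[0, ∞]`). -/
theorem integral_exp_quadratic_le_of_laplace_le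
    {H : Type*} [NormedAddCommGroup H] [InnerProductSpace ℝ H]
    [MeasurableSpace H] [BorelSpace H] [FiniteDimensional ℝ H]
    (Γ : Measure H) [IsFiniteMeasure Γ]
    (hLaplace : ∀ w : H,
      ∫⁻ v, ENNReal.ofReal (Real.exp ⟪v, w⟫) ∂Γ ≤
        ∫⁻ v, ENNReal.ofReal (Real.exp ⟪v, w⟫) ∂(stdGaussian H))
    (B : H →ₗ[ℝ] H →ₗ[ℝ] ℝ) (hB_symm : ∀ v w : H, B v w = B w v)
    (hB_pos : ∀ v : H, 0 ≤ B v v) :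
    ∫⁻ v, ENNReal.ofReal (Real.exp (B v v / 2)) ∂Γ ≤
      ∫⁻ v, ENNReal.ofReal (Real.exp (B v v / 2)) ∂(stdGaussian H) := by
  classical
  -- the symmetric operator associated to `B`
  let T : H →ₗ[ℝ] H :=
    { toFun := fun v =>
        (InnerProductSpace.toDual ℝ H).symm (LinearMap.toContinuousLinearMap (B v))
      map_add' := fun v w => by simp [map_add]
      map_smul' := fun c v => by simp [_root_.map_smul] }
  have hT : ∀ v w : H, ⟪T v, w⟫ = B v w := fun v w =>
    InnerProductSpace.toDual_symm_apply
  have hTsymm : T.IsSymmetric := by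
    intro v w
    rw [hT v w, hB_symm, ← hT w v, real_inner_comm]
  let b := hTsymm.eigenvectorBasis rfl
  let μ := hTsymm.eigenvalues rfl
  have hb : ∀ i, T (b i) = μ i • b i := fun i =>
    hTsymm.apply_eigenvectorBasis rfl i
  have hbnorm : ∀ i, ⟪b i, b i⟫ = 1 := fun i => by
    rw [real_inner_self_eq_norm_sq, b.orthonormal.1 i, one_pow]
  have hμ : ∀ i, 0 ≤ μ i := by
    intro i
    have h := hT (b i) (b i)
    rw [hb i, real_inner_smul_left, hbnorm i, mul_one] at h
    rw [h]
    exact hB_pos (b i)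
  -- the "square root" of `B`
  set S : H → H := fun v => ∑ i, (Real.sqrt (μ i) * ⟪v, b i⟫) • b i with hS_def
  have hS_inner : ∀ v w : H, ⟪S v, w⟫ = ∑ i, Real.sqrt (μ i) * ⟪v, b i⟫ * ⟪b i, w⟫ := by
    intro v w
    rw [hS_def, sum_inner]
    simp_rw [real_inner_smul_left]
  have hS_symm : ∀ v w : H, ⟪S v, w⟫ = ⟪v, S w⟫ := by
    intro v w
    rw [hS_inner v w, ← real_inner_comm v (S w), hS_inner w v]
    refine Finset.sum_congr rfl fun i _ => ?_
    rw [real_inner_comm v (b i), real_inner_comm (b i) w]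
    ring
  have hS_normsq : ∀ v : H, ⟪S v, S v⟫ = B v v := by
    intro v
    have h1 : ⟪S v, S v⟫
        = ∑ i, (Real.sqrt (μ i) * ⟪v, b i⟫) * (Real.sqrt (μ i) * ⟪v, b i⟫) := by
      simpa using b.orthonormal.inner_sum (fun i => Real.sqrt (μ i) * ⟪v, b i⟫)
        (fun i => Real.sqrt (μ i) * ⟪v, b i⟫) Finset.univ
    have h2 : B v v = ∑ i, μ i * (⟪v, b i⟫ * ⟪v, b i⟫) := by
      rw [← hT v v, ← b.sum_inner_mul_inner (T v) v]
      refine Finset.sum_congr rfl fun i _ => ?_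
      have h3 : ⟪T v, b i⟫ = μ i * ⟪v, b i⟫ := by
        rw [hTsymm v (b i), hb i, real_inner_smul_right]
      rw [h3, real_inner_comm (b i) v]
      ring
    rw [h1, h2]
    refine Finset.sum_congr rfl fun i _ => ?_
    have h4 : Real.sqrt (μ i) * Real.sqrt (μ i) = μ i := Real.mul_self_sqrt (hμ i)
    linear_combination (⟪v, b i⟫ * ⟪v, b i⟫) * h4
  have hS_cont : Continuous S := by
    refine continuous_finset_sum _ fun i _ => ?_
    exact ((continuous_const.mul (continuous_id.inner continuous_const)).smul continuous_const)
  -- rewrite `exp (B v v / 2)` as a Gaussian integral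
  have key : ∀ ν : Measure H, ∫⁻ v, ENNReal.ofReal (Real.exp (B v v / 2)) ∂ν
      = ∫⁻ v, ∫⁻ w, ENNReal.ofReal (Real.exp ⟪v, S w⟫) ∂(stdGaussian H) ∂ν := by
    intro ν
    refine lintegral_congr fun v => ?_
    have hq : B v v / 2 = ‖S v‖ ^ 2 / 2 := by
      rw [← hS_normsq v, real_inner_self_eq_norm_sq]
    rw [hq, ← lintegral_exp_inner_stdGaussian (S v)]
    exact (lintegral_congr fun w => by rw [hS_symm]).symm
  have hmeas : ∀ ν₁ ν₂ : Measure H,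
      AEMeasurable (Function.uncurry fun v w : H => ENNReal.ofReal (Real.exp ⟪v, S w⟫))
        (ν₁.prod ν₂) := by
    intro ν₁ ν₂
    have : Continuous fun p : H × H => ENNReal.ofReal (Real.exp ⟪p.1, S p.2⟫) :=
      ENNReal.continuous_ofReal.comp (Real.continuous_exp.comp
        (continuous_fst.inner (hS_cont.comp continuous_snd)))
    exact this.measurable.aemeasurable
  rw [key Γ, key (stdGaussian H), lintegral_lintegral_swap (hmeas Γ (stdGaussian H)),
    lintegral_lintegral_swap (hmeas (stdGaussian H) (stdGaussian H))]
  exact lintegral_mono' le_rfl fun w => hLaplace (S w)
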